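/- The sum of 1/(bd(b+d)) over all pairs of coprime positive integers (b,d) converges and equals 2. -/

import Mathlib

open Filter Topology

set_option maxHeartbeats 1000000

private abbrev CP := {p : ℕ × ℕ // 0 < p.1 ∧ 0 < p.2 ∧ Nat.gcd p.1 p.2 = 1}
private abbrev JJ := {p : ℕ × ℕ // 0 < p.1 ∧ p.1 ≤ p.2 ∧ Nat.gcd p.1 p.2 = 1}

private noncomputable def tf (x : CP) : ℝ :=
  1 / ((x.val.1 : ℝ) * (x.val.2 : ℝ) * ((x.val.1 : ℝ) + x.val.2))

private noncomputable def gf (x : CP) : ℝ :=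
  1 / ((x.val.1 : ℝ) * ((x.val.1 : ℝ) + x.val.2) ^ 2)

private noncomputable def hfJ (j : JJ) : ℝ := 1 / ((j.val.1 : ℝ) * (j.val.2 : ℝ) ^ 2)

/-- telescoping sum over one arithmetic chain -/
private lemma tele_real (a d : ℝ) (ha : 0 < a) (hd : 0 < d) :
    HasSum (fun k : ℕ => 1 / ((a + k * d) * d * ((a + k * d) + d))) (1 / (a * d ^ 2)) := by
  have hpos : ∀ k : ℕ, (0:ℝ) < a + k * d := fun k => by positivity
  set u : ℕ → ℝ := fun k => 1 / (d ^ 2 * (a + k * d)) with hu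
  have key : ∀ k : ℕ, 1 / ((a + k * d) * d * ((a + k * d) + d)) = u k - u (k + 1) := by
    intro k
    have h1 := hpos k
    have h2 := hpos (k + 1)
    simp only [hu]
    push_cast
    field_simp
    ring
  have hnn : ∀ k : ℕ, 0 ≤ 1 / ((a + k * d) * d * ((a + k * d) + d)) := fun k => by
    have := hpos k; positivity
  rw [hasSum_iff_tendsto_nat_of_nonneg hnn]
  have hps : ∀ n : ℕ,
      (∑ i ∈ Finset.range n, 1 / ((a + i * d) * d * ((a + i * d) + d))) = u 0 - u n := by
    intro n
    rw [Finset.sum_congr rfl (fun i _ => key i), Finset.sum_range_sub' u]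
  have hlim : Tendsto u atTop (nhds 0) := by
    have h1 : Tendsto (fun k : ℕ => (k:ℝ) * d) atTop atTop :=
      Tendsto.atTop_mul_const hd tendsto_natCast_atTop_atTop
    have h2 : Tendsto (fun k : ℕ => a + (k:ℝ) * d) atTop atTop :=
      tendsto_atTop_add_const_left atTop a h1
    have h3 : Tendsto (fun k : ℕ => d ^ 2 * (a + (k:ℝ) * d)) atTop atTop :=
      Tendsto.const_mul_atTop (by positivity : (0:ℝ) < d ^ 2) h2
    have h4 := h3.inv_tendsto_atTop
    have he : u = fun k : ℕ => (d ^ 2 * (a + k * d))⁻¹ := by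
      funext k; simp [hu, one_div]
    rw [he]
    exact h4
  have hfin : Tendsto (fun n : ℕ => u 0 - u n) atTop (nhds (u 0 - 0)) :=
    tendsto_const_nhds.sub hlim
  simp only [hps]
  convert hfin using 2
  simp [hu]
  ring

/-- the chain decomposition equivalence -/
private def Emap : JJ × ℕ ≃ CP where
  toFun x := ⟨(x.1.val.1 + x.2 * x.1.val.2, x.1.val.2),
    lt_of_lt_of_le x.1.prop.1 (Nat.le_add_right _ _),
    lt_of_lt_of_le x.1.prop.1 x.1.prop.2.1,
    by rw [Nat.gcd_add_mul_right_left]; exact x.1.prop.2.2⟩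
  invFun y :=
    if h : y.val.2 = 1 then
      ⟨⟨(1, 1), by norm_num⟩, y.val.1 - 1⟩
    else
      ⟨⟨(y.val.1 % y.val.2, y.val.2), by
        have hd : 0 < y.val.2 := y.prop.2.1
        have hmod : y.val.1 % y.val.2 ≠ 0 := by
          intro h0
          have hdvd : y.val.2 ∣ y.val.1 := Nat.dvd_of_mod_eq_zero h0
          have hdd : y.val.2 ∣ Nat.gcd y.val.1 y.val.2 := Nat.dvd_gcd hdvd dvd_rfl
          rw [y.prop.2.2] at hdd
          exact h (Nat.dvd_one.mp hdd)
        refine ⟨Nat.pos_of_ne_zero hmod, le_of_lt (Nat.mod_lt _ hd), ?_⟩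
        rw [← Nat.gcd_rec, Nat.gcd_comm]
        exact y.prop.2.2⟩, y.val.1 / y.val.2⟩
  left_inv := by
    rintro ⟨⟨⟨r, d⟩, hp⟩, k⟩
    have hr : 0 < r := hp.1
    have hrd : r ≤ d := hp.2.1
    have hg : Nat.gcd r d = 1 := hp.2.2
    dsimp only
    split_ifs with h
    · have hd1 : d = 1 := h
      have hr1 : r = 1 := by omega
      refine Prod.ext (Subtype.ext ?_) ?_
      · simp [hr1, hd1]
      · simp only [hr1, hd1]
        omega
    · have hd1 : d ≠ 1 := h
      have hrlt : r < d := by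
        rcases lt_or_eq_of_le hrd with h' | h'
        · exact h'
        · exfalso; rw [h', Nat.gcd_self] at hg; exact hd1 hg
      have hmod : (r + k * d) % d = r := by
        rw [Nat.add_mul_mod_self_right, Nat.mod_eq_of_lt hrlt]
      have hdiv : (r + k * d) / d = k := by
        rw [Nat.add_mul_div_right _ _ (by omega : 0 < d)]
        simp [Nat.div_eq_of_lt hrlt]
      refine Prod.ext (Subtype.ext ?_) ?_
      · simp only []
        rw [hmod]
      · simp only []
        rw [hdiv]
  right_inv := by
    rintro ⟨⟨b, d⟩, hp⟩
    have hb : 0 < b := hp.1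
    dsimp only
    split_ifs with h
    · have hd1 : d = 1 := h
      apply Subtype.ext
      simp only []
      rw [hd1]
      simp
      omega
    · apply Subtype.ext
      simp only []
      rw [Nat.mod_add_div']

/-- swap equivalence on coprime pairs -/
private def swapE : CP ≃ CP where
  toFun x := ⟨(x.val.2, x.val.1), x.prop.2.1, x.prop.1, by
    rw [Nat.gcd_comm]; exact x.prop.2.2⟩
  invFun x := ⟨(x.val.2, x.val.1), x.prop.2.1, x.prop.1, by
    rw [Nat.gcd_comm]; exact x.prop.2.2⟩
  left_inv x := by apply Subtype.ext; simp
  right_inv x := by apply Subtype.ext; simp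

/-- the embedding of coprime pairs into the "r ≤ d" pairs, (b,c) ↦ (b, b+c) -/
private def iEmb (x : CP) : JJ :=
  ⟨(x.val.1, x.val.1 + x.val.2), x.prop.1, Nat.le_add_right _ _, by
    rw [add_comm, Nat.gcd_add_self_right]; exact x.prop.2.2⟩

private lemma tf_summable : Summable tf := by
  have h1 : Summable (fun n : ℕ => 1 / (n:ℝ) ^ (3/2 : ℝ)) :=
    Real.summable_one_div_nat_rpow.mpr (by norm_num)
  have hbase : Summable (fun p : ℕ × ℕ =>
      (1 / (p.1:ℝ) ^ (3/2 : ℝ)) * (1 / (p.2:ℝ) ^ (3/2 : ℝ))) :=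
    h1.mul_of_nonneg h1 (fun n => by positivity) (fun n => by positivity)
  have hsub := hbase.comp_injective
    (Subtype.coe_injective : Function.Injective (fun x : CP => x.val))
  apply Summable.of_nonneg_of_le _ _ hsub
  · intro x
    have h1 : (0:ℝ) < x.val.1 := by exact_mod_cast x.prop.1
    have h2 : (0:ℝ) < x.val.2 := by exact_mod_cast x.prop.2.1
    unfold tf; positivity
  · intro x
    have hb : (0:ℝ) < x.val.1 := by exact_mod_cast x.prop.1
    have hd : (0:ℝ) < x.val.2 := by exact_mod_cast x.prop.2.1
    set b : ℝ := (x.val.1 : ℝ) with hbdef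
    set d : ℝ := (x.val.2 : ℝ) with hddef
    show (1:ℝ) / (b * d * (b + d)) ≤ 1 / b ^ (3/2 : ℝ) * (1 / d ^ (3/2 : ℝ))
    rw [div_mul_div_comm, one_mul]
    apply one_div_le_one_div_of_le
    · positivity
    · have e1 : b ^ (3/2 : ℝ) = b * Real.sqrt b := by
        rw [show (3/2 : ℝ) = 1 + 1/2 by norm_num, Real.rpow_add hb, Real.rpow_one,
          ← Real.sqrt_eq_rpow]
      have e2 : d ^ (3/2 : ℝ) = d * Real.sqrt d := by
        rw [show (3/2 : ℝ) = 1 + 1/2 by norm_num, Real.rpow_add hd, Real.rpow_one,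
          ← Real.sqrt_eq_rpow]
      have hs : Real.sqrt b * Real.sqrt d ≤ b + d := by
        rw [← Real.sqrt_mul hb.le]
        calc Real.sqrt (b * d) ≤ Real.sqrt ((b + d) ^ 2) :=
              Real.sqrt_le_sqrt (by nlinarith)
          _ = b + d := Real.sqrt_sq (by positivity)
      rw [e1, e2]
      calc b * Real.sqrt b * (d * Real.sqrt d)
          = b * d * (Real.sqrt b * Real.sqrt d) := by ring
        _ ≤ b * d * (b + d) := by
            apply mul_le_mul_of_nonneg_left hs (by positivity)

private lemma fiber (j : JJ) : HasSum (fun k : ℕ => tf (Emap (j, k))) (hfJ j) := by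
  have hr : (0:ℝ) < j.val.1 := by exact_mod_cast j.prop.1
  have hd : (0:ℝ) < j.val.2 := by exact_mod_cast lt_of_lt_of_le j.prop.1 j.prop.2.1
  have h := tele_real _ _ hr hd
  convert h using 1
  funext k
  simp only [tf, Emap, Equiv.coe_fn_mk]
  push_cast
  ring_nf
  rfl

theorem sum_coprime_mt :
    HasSum (fun x : {p : ℕ × ℕ // 0 < p.1 ∧ 0 < p.2 ∧ Nat.gcd p.1 p.2 = 1} =>
      1 / ((x.val.1 : ℝ) * (x.val.2 : ℝ) * ((x.val.1 : ℝ) + x.val.2))) 2 := by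
  obtain ⟨S, hS⟩ := tf_summable
  have hE : HasSum (fun x : JJ × ℕ => tf (Emap x)) S := (Equiv.hasSum_iff Emap).2 hS
  have hJ : HasSum hfJ S := hE.prod_fiberwise fiber
  set j0 : JJ := ⟨(1, 1), by norm_num⟩ with hj0
  -- gf is summable since gf ≤ tf
  have hgnn : ∀ x : CP, 0 ≤ gf x := by
    intro x
    have h1 : (0:ℝ) < x.val.1 := by exact_mod_cast x.prop.1
    have h2 : (0:ℝ) < x.val.2 := by exact_mod_cast x.prop.2.1
    unfold gf; positivity
  have hgle : ∀ x : CP, gf x ≤ tf x := by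
    intro x
    have h1 : (0:ℝ) < x.val.1 := by exact_mod_cast x.prop.1
    have h2 : (0:ℝ) < x.val.2 := by exact_mod_cast x.prop.2.1
    unfold gf tf
    apply one_div_le_one_div_of_le (by positivity)
    nlinarith [mul_pos (mul_pos h1 h1) (add_pos h1 h2)]
  have hgsum : Summable gf := tf_summable.of_nonneg_of_le hgnn hgle
  obtain ⟨V, hV⟩ := hgsum
  -- injectivity of iEmb
  have hiinj : Function.Injective iEmb := by
    intro x y h
    apply Subtype.ext
    have h1 := congrArg (fun j : JJ => j.val.1) h
    have h2 := congrArg (fun j : JJ => j.val.2) h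
    simp [iEmb] at h1 h2
    exact Prod.ext h1 (by omega)
  -- support condition
  have hsupp : ∀ j : JJ, j ∉ Set.range iEmb → (if j = j0 then 0 else hfJ j) = 0 := by
    intro j hj
    by_cases hje : j = j0
    · simp [hje]
    · exfalso
      apply hj
      have hrd : j.val.1 < j.val.2 := by
        rcases lt_or_eq_of_le j.prop.2.1 with h | h
        · exact h
        · exfalso
          have hg := j.prop.2.2
          rw [h, Nat.gcd_self] at hg
          apply hje
          apply Subtype.ext
          apply Prod.ext
          · simp [hj0]; omega
          · simp [hj0]; omega
      refine ⟨⟨(j.val.1, j.val.2 - j.val.1), j.prop.1, by omega, ?_⟩, ?_⟩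
      · show Nat.gcd j.val.1 (j.val.2 - j.val.1) = 1
        rw [Nat.gcd_sub_self_right (le_of_lt hrd)]
        exact j.prop.2.2
      · apply Subtype.ext
        apply Prod.ext
        · simp [iEmb]
        · simp [iEmb]; omega
  -- the ite sum
  have hite : HasSum (fun j : JJ => if j = j0 then 0 else hfJ j) V := by
    rw [← Function.Injective.hasSum_iff hiinj hsupp]
    have he : ∀ x : CP, (if iEmb x = j0 then 0 else hfJ (iEmb x)) = gf x := by
      intro x
      have hne : iEmb x ≠ j0 := by
        intro h
        have h2 := congrArg (fun j : JJ => j.val.2) h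
        simp [iEmb, hj0] at h2
        have := x.prop.1
        have := x.prop.2.1
        omega
      rw [if_neg hne]
      simp only [hfJ, iEmb, gf]
      push_cast
      ring
    rw [show ((fun j : JJ => if j = j0 then 0 else hfJ j) ∘ iEmb) = gf by
      funext x; simp only [Function.comp_apply]; exact he x]
    exact hV
  have hS_eq : S = V + hfJ j0 := eq_add_of_hasSum_ite hJ j0 V hite
  have hj0val : hfJ j0 = 1 := by simp [hfJ, hj0]
  -- symmetry: S = V + V
  have hVs : HasSum (fun x => gf (swapE x)) V := (Equiv.hasSum_iff swapE).2 hV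
  have hadd : HasSum (fun x => gf x + gf (swapE x)) (V + V) := hV.add hVs
  have htf : ∀ x : CP, gf x + gf (swapE x) = tf x := by
    intro x
    have h1 : (0:ℝ) < x.val.1 := by exact_mod_cast x.prop.1
    have h2 : (0:ℝ) < x.val.2 := by exact_mod_cast x.prop.2.1
    simp only [gf, swapE, tf, Equiv.coe_fn_mk]
    rw [add_comm ((x.val.2 : ℝ)) ((x.val.1 : ℝ))]
    field_simp
    ring
  have hS2 : HasSum tf (V + V) := by
    have heq : (fun x => gf x + gf (swapE x)) = tf := funext htf
    rw [← heq]
    exact hadd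
  have hSV : S = V + V := hS.unique hS2
  have hS2val : S = 2 := by rw [hS_eq, hj0val] at hSV ⊢; linarith
  rw [← hS2val]
  exact hS
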